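/- For all integers ℓ ≥ 2 and reals τ ≥ 1 there exists a constant C_B = C_B(ℓ, τ) > 0 as follows. Let M ≥ 1 be an integer, let 0 < α ≤ 1, and let 0 = τ_1 < τ_2 < … < τ_ℓ ≤ τ be reals with |τ_i − τ_j| ≥ 1 for all i ≠ j. Set h_i := −τ_i·(α/M), and let (A_1, …, A_ℓ, B_1, …, B_ℓ) be the unique solution of the linear system U_{2ℓ}(h)·(A; B)ᵀ = (0, …, 0, (2ℓ−1)!)ᵀ. Then Σ_{i=1}^{ℓ} |B_i| ≤ C_B · (M/α)^{2ℓ−2}. -/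
import Mathlib


open scoped BigOperators

/-- The square `2ℓ × 2ℓ` confluent Vandermonde matrix `U_{2ℓ}(h)`: rows `k = 0, …, 2ℓ-1`,
entry `h_j^k` in column `j` and `k h_j^{k-1}` in column `ℓ + j`. -/
noncomputable def U2l (ℓ : ℕ) (h : Fin ℓ → ℝ) : Matrix (Fin (2 * ℓ)) (Fin ℓ ⊕ Fin ℓ) ℂ :=
  fun k => Sum.elim (fun j => ((h j : ℂ)) ^ (k : ℕ))
    (fun j => ((k : ℕ) : ℂ) * ((h j : ℂ)) ^ ((k : ℕ) - 1))

/-- The right-hand side `(0, …, 0, (2ℓ-1)!)ᵀ` of the finite-difference linear system. -/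
noncomputable def fdRhs (ℓ : ℕ) : Fin (2 * ℓ) → ℂ :=
  fun k => if (k : ℕ) = 2 * ℓ - 1 then ((2 * ℓ - 1).factorial : ℂ) else 0

open Polynomial Finset

lemma deriv_sum_aux (P : Polynomial ℂ) (n : ℕ) (hn : P.natDegree < n) (x : ℂ) :
    ∑ k ∈ Finset.range n, P.coeff k * ((k : ℂ) * x ^ (k - 1)) =
      (Polynomial.derivative P).eval x := by
  have hd : (Polynomial.derivative P).natDegree < n :=
    lt_of_le_of_lt (Polynomial.natDegree_derivative_le P) (by omega)
  rw [Polynomial.eval_eq_sum_range' hd]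
  have h1 : ∑ k ∈ Finset.range (n+1), P.coeff k * ((k : ℂ) * x ^ (k - 1)) =
      ∑ k ∈ Finset.range n, P.coeff k * ((k : ℂ) * x ^ (k - 1)) := by
    rw [Finset.sum_range_succ, Polynomial.coeff_eq_zero_of_natDegree_lt hn]
    ring
  rw [← h1, Finset.sum_range_succ']
  simp [Polynomial.coeff_derivative]
  ring_nf
  congr 1
  ext m
  ring

lemma key_identity (ℓ : ℕ) (hℓ : 1 ≤ ℓ) (h : Fin ℓ → ℝ) (A B : Fin ℓ → ℂ)
    (hEq : (U2l ℓ h).mulVec (Sum.elim A B) = fdRhs ℓ) (i : Fin ℓ) :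
    B i * (∏ j ∈ Finset.univ.erase i, (((h i : ℂ)) - (h j : ℂ))) ^ 2 =
      ((2 * ℓ - 1).factorial : ℂ) := by
  set Q : Polynomial ℂ := ∏ j ∈ Finset.univ.erase i, (X - C ((h j : ℂ))) with hQ
  set P : Polynomial ℂ := (X - C ((h i : ℂ))) * Q ^ 2 with hP
  have hQmonic : Q.Monic := monic_prod_of_monic _ _ (fun j _ => monic_X_sub_C _)
  have hQdeg : Q.natDegree = ℓ - 1 := by
    rw [hQ, natDegree_prod_of_monic _ _ (fun j _ => monic_X_sub_C _)]
    simp [Finset.card_erase_of_mem]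
  have hPmonic : P.Monic := (monic_X_sub_C _).mul (hQmonic.pow 2)
  have hPdeg : P.natDegree = 2 * ℓ - 1 := by
    rw [hP, natDegree_mul (monic_X_sub_C _).ne_zero (hQmonic.pow 2).ne_zero,
      natDegree_X_sub_C, hQmonic.natDegree_pow, hQdeg]
    omega
  have hPdeglt : P.natDegree < 2 * ℓ := by omega
  -- evaluations
  have hQeval0 : ∀ j ∈ Finset.univ.erase i, Q.eval ((h j : ℂ)) = 0 := by
    intro j hj
    rw [hQ, eval_prod]
    exact Finset.prod_eq_zero hj (by simp)
  have hPeval : ∀ j : Fin ℓ, P.eval ((h j : ℂ)) = 0 := by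
    intro j
    by_cases hji : j = i
    · simp [hP, hji]
    · simp [hP, hQeval0 j (Finset.mem_erase.2 ⟨hji, Finset.mem_univ _⟩)]
  have hPderiv : Polynomial.derivative P =
      Q ^ 2 + (X - C ((h i : ℂ))) * (C 2 * Q * Polynomial.derivative Q) := by
    rw [hP, derivative_mul, derivative_sub, derivative_X, derivative_C, derivative_pow]
    ring
  have hPderivEval : ∀ j : Fin ℓ,
      (Polynomial.derivative P).eval ((h j : ℂ)) =
        if j = i then (Q.eval ((h i : ℂ))) ^ 2 else 0 := by
    intro j
    by_cases hji : j = i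
    · subst hji; simp [hPderiv]
    · have h0 := hQeval0 j (Finset.mem_erase.2 ⟨hji, Finset.mem_univ _⟩)
      simp [hPderiv, hji, h0]
  -- sum against coefficients
  have hS : ∑ k : Fin (2 * ℓ), P.coeff (k : ℕ) * ((U2l ℓ h).mulVec (Sum.elim A B)) k =
      ∑ k : Fin (2 * ℓ), P.coeff (k : ℕ) * fdRhs ℓ k := by
    rw [hEq]
  -- RHS
  have hRHS : ∑ k : Fin (2 * ℓ), P.coeff (k : ℕ) * fdRhs ℓ k =
      ((2 * ℓ - 1).factorial : ℂ) := by
    have hmem : (2 * ℓ - 1) < 2 * ℓ := by omega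
    rw [show (∑ k : Fin (2 * ℓ), P.coeff (k : ℕ) * fdRhs ℓ k) =
        ∑ k : Fin (2 * ℓ), (if k = (⟨2 * ℓ - 1, hmem⟩ : Fin (2 * ℓ)) then
          P.coeff (k : ℕ) * ((2 * ℓ - 1).factorial : ℂ) else 0) from ?_]
    · rw [Finset.sum_ite_eq' _ _ _, if_pos (Finset.mem_univ _)]
      have hc1 : P.coeff (2 * ℓ - 1) = 1 := by
        rw [← hPdeg]; exact hPmonic.coeff_natDegree
      rw [hc1, one_mul]
    · apply Finset.sum_congr rfl
      intro k _
      by_cases hk : (k : ℕ) = 2 * ℓ - 1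
      · have : k = (⟨2 * ℓ - 1, hmem⟩ : Fin (2 * ℓ)) := Fin.ext hk
        simp [fdRhs, this]
      · have : k ≠ (⟨2 * ℓ - 1, hmem⟩ : Fin (2 * ℓ)) := by
          intro hc; exact hk (by rw [hc])
        simp [fdRhs, hk, this]
  -- LHS
  have hLHS : ∑ k : Fin (2 * ℓ), P.coeff (k : ℕ) * ((U2l ℓ h).mulVec (Sum.elim A B)) k =
      B i * (Q.eval ((h i : ℂ))) ^ 2 := by
    have expand : ∀ k : Fin (2 * ℓ), ((U2l ℓ h).mulVec (Sum.elim A B)) k =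
        (∑ j : Fin ℓ, A j * (h j : ℂ) ^ (k : ℕ)) +
        (∑ j : Fin ℓ, B j * (((k : ℕ) : ℂ) * (h j : ℂ) ^ ((k : ℕ) - 1))) := by
      intro k
      rw [Matrix.mulVec, dotProduct, Fintype.sum_sum_type]
      congr 1 <;> (apply Finset.sum_congr rfl; intro j _; simp [U2l]; ring)
    calc ∑ k : Fin (2 * ℓ), P.coeff (k : ℕ) * ((U2l ℓ h).mulVec (Sum.elim A B)) k
        = ∑ j : Fin ℓ, (A j * P.eval ((h j : ℂ)) +
            B j * (Polynomial.derivative P).eval ((h j : ℂ))) := by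
          simp only [expand, mul_add, Finset.sum_add_distrib, Finset.mul_sum]
          congr 1
          · rw [Finset.sum_comm]
            apply Finset.sum_congr rfl; intro j _
            rw [Fin.sum_univ_eq_sum_range (fun k => P.coeff k * (A j * (h j:ℂ) ^ k))]
            rw [eval_eq_sum_range' hPdeglt]
            rw [Finset.mul_sum]
            apply Finset.sum_congr rfl; intro k _; ring
          · rw [Finset.sum_comm]
            apply Finset.sum_congr rfl; intro j _
            rw [Fin.sum_univ_eq_sum_range
              (fun k => P.coeff k * (B j * (((k:ℕ):ℂ) * (h j:ℂ) ^ (k - 1))))]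
            rw [← deriv_sum_aux P (2*ℓ) hPdeglt ((h j : ℂ)), Finset.mul_sum]
            apply Finset.sum_congr rfl; intro k _; ring
      _ = B i * (Q.eval ((h i : ℂ))) ^ 2 := by
          rw [Finset.sum_congr rfl (fun j _ => by
            rw [hPeval j, hPderivEval j, mul_zero, zero_add, mul_ite, mul_zero])]
          simp
  have : B i * (Q.eval ((h i : ℂ))) ^ 2 = ((2 * ℓ - 1).factorial : ℂ) := by
    rw [← hLHS, hS, hRHS]
  rw [← this, hQ, eval_prod]
  simp

/-- Lemma (bound on the finite-difference weights `B_i`): there is `C_B = C_B(ℓ, τ) > 0` such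
that for nodes `h_i = -τ_i α/M` with `0 = τ_1 < … < τ_ℓ ≤ τ`, `|τ_i - τ_j| ≥ 1`, and the
weights solving `U_{2ℓ}(h)(A; B)ᵀ = (0, …, 0, (2ℓ-1)!)ᵀ`, one has
`Σ_i |B_i| ≤ C_B (M/α)^{2ℓ-2}`. -/
theorem fd_weights_B_bound (ℓ : ℕ) (hℓ : 2 ≤ ℓ) (τ : ℝ) (hτ : 1 ≤ τ) :
    ∃ C_B : ℝ, 0 < C_B ∧
      ∀ (M : ℕ), 1 ≤ M → ∀ α : ℝ, 0 < α → α ≤ 1 →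
        ∀ t : Fin ℓ → ℝ, t ⟨0, by omega⟩ = 0 → StrictMono t → (∀ i, t i ≤ τ) →
          (∀ i j : Fin ℓ, i ≠ j → 1 ≤ |t i - t j|) →
          ∀ A B : Fin ℓ → ℂ,
            (U2l ℓ (fun i => -(t i) * (α / M))).mulVec (Sum.elim A B) = fdRhs ℓ →
            ∑ i, ‖B i‖ ≤ C_B * ((M : ℝ) / α) ^ (2 * ℓ - 2) := by
  refine ⟨ℓ * (2 * ℓ - 1).factorial, by positivity, ?_⟩
  intro M hM α hα hα1 t ht0 htmono htτ hsep A B hU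
  set h : Fin ℓ → ℝ := fun i => -(t i) * (α / M) with hh
  have hMpos : (0 : ℝ) < M := by exact_mod_cast Nat.lt_of_lt_of_le Nat.zero_lt_one hM
  set s : ℝ := α / M with hs
  have hspos : 0 < s := div_pos hα hMpos
  -- separation of the h's
  have hhsep : ∀ i j : Fin ℓ, i ≠ j → s ≤ |h i - h j| := by
    intro i j hij
    have : h i - h j = (t j - t i) * s := by rw [hh]; ring
    rw [this, abs_mul, abs_of_pos hspos]
    have h1 : 1 ≤ |t j - t i| := hsep j i (Ne.symm hij)
    nlinarith [hspos]
  -- bound each ‖B i‖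
  have hBi : ∀ i : Fin ℓ, ‖B i‖ ≤ ((2 * ℓ - 1).factorial : ℝ) * ((M : ℝ) / α) ^ (2 * ℓ - 2) := by
    intro i
    have hid := key_identity ℓ (by omega) h A B hU i
    have hnorm := congrArg norm hid
    rw [norm_mul, norm_pow, norm_prod] at hnorm
    have hterm : ∀ j : Fin ℓ, ‖((h i : ℂ)) - ((h j : ℂ))‖ = |h i - h j| := by
      intro j
      rw [← Complex.ofReal_sub, Complex.norm_real, Real.norm_eq_abs]
    simp only [hterm] at hnorm
    have hfact : ‖(((2 * ℓ - 1).factorial : ℕ) : ℂ)‖ = ((2 * ℓ - 1).factorial : ℝ) := by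
      simp
    rw [hfact] at hnorm
    -- product lower bound
    have hprod : s ^ (ℓ - 1) ≤ ∏ j ∈ Finset.univ.erase i, |h i - h j| := by
      have := Finset.prod_le_prod (s := Finset.univ.erase i)
        (f := fun _ => s) (g := fun j => |h i - h j|)
        (fun j _ => le_of_lt hspos)
        (fun j hj => hhsep i j (Ne.symm (Finset.ne_of_mem_erase hj)))
      rwa [Finset.prod_const, Finset.card_erase_of_mem (Finset.mem_univ i),
        Finset.card_univ, Fintype.card_fin] at this
    have hprodpos : 0 < ∏ j ∈ Finset.univ.erase i, |h i - h j| :=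
      lt_of_lt_of_le (pow_pos hspos _) hprod
    have hsq : s ^ (2 * ℓ - 2) ≤ (∏ j ∈ Finset.univ.erase i, |h i - h j|) ^ 2 := by
      calc s ^ (2 * ℓ - 2) = (s ^ (ℓ - 1)) ^ 2 := by
            rw [← pow_mul]; congr 1; omega
        _ ≤ (∏ j ∈ Finset.univ.erase i, |h i - h j|) ^ 2 := by
            apply pow_le_pow_left₀ (le_of_lt (pow_pos hspos _)) hprod
    have key : ‖B i‖ * s ^ (2 * ℓ - 2) ≤ ((2 * ℓ - 1).factorial : ℝ) := by
      calc ‖B i‖ * s ^ (2 * ℓ - 2)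
          ≤ ‖B i‖ * (∏ j ∈ Finset.univ.erase i, |h i - h j|) ^ 2 :=
            mul_le_mul_of_nonneg_left hsq (norm_nonneg _)
        _ = ((2 * ℓ - 1).factorial : ℝ) := hnorm
    have hinv : ((M : ℝ) / α) = s⁻¹ := by
      rw [hs, inv_div]
    rw [hinv]
    rw [inv_pow]
    rw [← div_eq_mul_inv, le_div_iff₀ (pow_pos hspos _)]
    exact key
  calc ∑ i, ‖B i‖ ≤ ∑ _i : Fin ℓ, ((2 * ℓ - 1).factorial : ℝ) * ((M : ℝ) / α) ^ (2 * ℓ - 2) :=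
        Finset.sum_le_sum (fun i _ => hBi i)
    _ = ℓ * (2 * ℓ - 1).factorial * ((M : ℝ) / α) ^ (2 * ℓ - 2) := by
        rw [Finset.sum_const, Finset.card_univ, Fintype.card_fin, nsmul_eq_mul]
        ring
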